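/- Let X be a real normed space, f : X → (-∞,+∞] lsc, x̄ ∈ dom f, u ∈ X, and suppose f is radially accessible at x̄ from u. Then for every α ≥ 0, f^r_+(x̄;u) ≤ limsup_{x →_u x̄} f^r(x; u + α(x̄ − x)), where x →_u x̄ means x = x̄ + t v' with t ↘ 0 and v' → u (directional convergence from direction u). -/

import Mathlib

open Filter Topology

private lemma ereal_le_coe_of_forall_eps (x : EReal) (c : ℝ)
    (h : ∀ ε : ℝ, 0 < ε → x ≤ ((c + ε : ℝ) : EReal)) : x ≤ (c : EReal) := by
  by_contra hc
  push_neg at hc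
  induction x using EReal.rec with
  | bot => exact absurd hc (by simp)
  | top => exact (EReal.coe_ne_top (c+1)) (top_le_iff.mp (h 1 one_pos))
  | coe d =>
    have hcd : c < d := by exact_mod_cast hc
    have := h ((d - c)/2) (by linarith)
    rw [EReal.coe_le_coe_iff] at this
    linarith

private lemma growth (φ : ℝ → EReal) (hφ : LowerSemicontinuous φ) (r' a b A : ℝ)
    (hab : a < b) (hA : φ a ≤ (A : EReal))
    (hyp : ∀ t, a ≤ t → t < b → φ t ≠ ⊤ →
      ∃ s, 0 < s ∧ t + s ≤ b ∧ φ (t + s) ≤ φ t + ((r' * s : ℝ) : EReal)) :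
    φ b ≤ ((A + r' * (b - a) : ℝ) : EReal) := by
  set S : Set ℝ := {t | t ∈ Set.Icc a b ∧ φ t ≤ ((A + r' * (t - a) : ℝ) : EReal)} with hS
  have haS : a ∈ S := ⟨⟨le_refl a, le_of_lt hab⟩, by simpa using hA⟩
  have hSne : S.Nonempty := ⟨a, haS⟩
  have hSbdd : BddAbove S := ⟨b, fun t ht => ht.1.2⟩
  set m := sSup S with hm
  have hmab : m ∈ Set.Icc a b := ⟨le_csSup hSbdd haS, csSup_le hSne fun t ht => ht.1.2⟩
  have hmS : φ m ≤ ((A + r' * (m - a) : ℝ) : EReal) := by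
    by_contra hc
    push_neg at hc
    obtain ⟨y, hy1, hy2⟩ := EReal.exists_between_coe_real hc
    have h1 : ∀ᶠ t in 𝓝 m, (y : EReal) < φ t := hφ m (y : EReal) hy2
    have h2 : ∀ᶠ t in 𝓝 m, A + r' * (t - a) < y := by
      have hcont : Continuous fun t : ℝ => A + r' * (t - a) := by continuity
      have hval : A + r' * (m - a) < y := by exact_mod_cast hy1
      exact (hcont.continuousAt (x := m)).eventually_lt continuousAt_const hval
    obtain ⟨η, hη, hball⟩ := Metric.eventually_nhds_iff.mp (h1.and h2)
    obtain ⟨t, htS, htm⟩ := exists_lt_of_lt_csSup hSne (show m - η < m by linarith)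
    have htm' : t ≤ m := le_csSup hSbdd htS
    have hd : dist t m < η := by rw [Real.dist_eq, abs_lt]; constructor <;> linarith
    obtain ⟨hy, hlt⟩ := hball hd
    exact absurd (lt_of_le_of_lt htS.2 (by exact_mod_cast hlt)) (not_lt.mpr hy.le)
  rcases lt_or_eq_of_le hmab.2 with hmb | hmb
  · exfalso
    have hne : φ m ≠ ⊤ := fun h => EReal.coe_ne_top _ (top_le_iff.mp (h ▸ hmS))
    obtain ⟨s, hs0, hsb, hle⟩ := hyp m hmab.1 hmb hne
    have hin : m + s ∈ S := by
      refine ⟨⟨by linarith [hmab.1], hsb⟩, ?_⟩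
      calc φ (m + s) ≤ φ m + ((r' * s : ℝ) : EReal) := hle
        _ ≤ ((A + r' * (m - a) : ℝ) : EReal) + ((r' * s : ℝ) : EReal) := by
            exact add_le_add_left hmS _
        _ = ((A + r' * (m + s - a) : ℝ) : EReal) := by norm_cast; ring
    have : m + s ≤ m := le_csSup hSbdd hin
    linarith
  · rw [← hmb]; exact hmS

/-- Lower radial subderivative `f^r(x;u)`. -/
noncomputable def radial {X : Type*} [NormedAddCommGroup X] [NormedSpace ℝ X]
    (f : X → EReal) (x u : X) : EReal :=
  Filter.liminf (fun t : ℝ => ((t⁻¹ : ℝ) : EReal) * (f (x + t • u) - f x)) (𝓝[>] (0:ℝ))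

/-- Upper radial subderivative `f^r_+(x;u)`. -/
noncomputable def radialPlus {X : Type*} [NormedAddCommGroup X] [NormedSpace ℝ X]
    (f : X → EReal) (x u : X) : EReal :=
  Filter.limsup (fun t : ℝ => ((t⁻¹ : ℝ) : EReal) * (f (x + t • u) - f x)) (𝓝[>] (0:ℝ))

/-- The "drop" `xbar + ]0, ε B(v,ε)[`. -/
def drop {X : Type*} [NormedAddCommGroup X] [NormedSpace ℝ X]
    (xbar v : X) (ε : ℝ) : Set X :=
  {y | ∃ t : ℝ, ∃ v' : X, 0 < t ∧ t < ε ∧ ‖v' - v‖ < ε ∧ y = xbar + t • v'}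

/-- The filter of directional convergence `x →_v xbar`. -/
noncomputable def dirFilter {X : Type*} [NormedAddCommGroup X] [NormedSpace ℝ X]
    (xbar v : X) : Filter X :=
  ⨅ ε : {e : ℝ // 0 < e}, Filter.principal (drop xbar v (ε : ℝ))

theorem upper_radial_le_directional_limsup {X : Type*} [NormedAddCommGroup X] [NormedSpace ℝ X]
    (f : X → EReal) (hf : LowerSemicontinuous f) (hbot : ∀ y, f y ≠ ⊥)
    (xbar : X) (hxbar : f xbar ≠ ⊤) (u : X)
    (hacc : Filter.liminf (fun t : ℝ => f (xbar + t • u)) (𝓝[>] (0:ℝ)) = f xbar) :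
    ∀ α : ℝ, 0 ≤ α →
      radialPlus f xbar u ≤
        Filter.limsup
          (fun x => if f x = ⊤ then (⊥ : EReal)
            else radial f x (u + α • (xbar - x))) (dirFilter xbar u) := by
  intro α hα
  obtain ⟨A, hA⟩ : ∃ A : ℝ, f xbar = (A : EReal) :=
    ⟨_, (EReal.coe_toReal hxbar (hbot xbar)).symm⟩
  have hφlsc : LowerSemicontinuous (fun t : ℝ => f (xbar + t • u)) :=
    hf.comp (g := fun t : ℝ => xbar + t • u) (by continuity)
  by_contra hcon
  push_neg at hcon
  obtain ⟨r, hr1, hr2⟩ := EReal.exists_between_coe_real hcon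
  obtain ⟨r', hr1', hr2'⟩ := EReal.exists_between_coe_real hr2
  have hrr' : r < r' := by exact_mod_cast hr1'
  -- the ray tends to dirFilter
  have hray : Filter.Tendsto (fun t : ℝ => xbar + t • u) (𝓝[>] (0:ℝ)) (dirFilter xbar u) := by
    rw [dirFilter, Filter.tendsto_iInf]
    intro ε
    rw [Filter.tendsto_principal]
    filter_upwards [Ioo_mem_nhdsGT_of_mem (Set.mem_Ico.mpr ⟨le_refl (0:ℝ), ε.2⟩)] with t ht
    exact ⟨t, u, ht.1, ht.2, by simpa using ε.2, rfl⟩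
  have hev0 := hray.eventually (Filter.eventually_lt_of_limsup_lt hr1)
  obtain ⟨δ₀, hδ₀pos, hδ₀⟩ : ∃ δ₀ : ℝ, 0 < δ₀ ∧ ∀ t : ℝ, 0 < t → t < δ₀ →
      (if f (xbar + t • u) = ⊤ then (⊥:EReal)
        else radial f (xbar + t • u) (u + α • (xbar - (xbar + t • u)))) < (r : EReal) := by
    obtain ⟨c, hc, hsub⟩ := mem_nhdsGT_iff_exists_Ioo_subset.mp hev0
    exact ⟨c, hc, fun t h1 h2 => hsub ⟨h1, h2⟩⟩
  set δ : ℝ := min δ₀ (min ((r' - r)/(α * |r'| + 1)) (1/(2*(α+1)))) with hδ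
  have hδpos : 0 < δ := by
    refine lt_min hδ₀pos (lt_min (div_pos (by linarith) (by positivity)) (by positivity))
  -- the key decrease property
  have key : ∀ t : ℝ, 0 < t → t < δ → f (xbar + t • u) ≠ ⊤ → ∀ η : ℝ, 0 < η →
      ∃ s : ℝ, 0 < s ∧ s < η ∧
        f (xbar + (t + s) • u) ≤ f (xbar + t • u) + ((r' * s : ℝ) : EReal) := by
    intro t ht htδ hft η hη
    set x := xbar + t • u with hx
    set c : ℝ := 1 - α * t with hc
    have htδ2 : t < 1/(2*(α+1)) := lt_of_lt_of_le htδ ((min_le_right _ _).trans (min_le_right _ _))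
    have htδ1 : t ≤ (r' - r)/(α * |r'| + 1) := le_of_lt (lt_of_lt_of_le htδ ((min_le_right _ _).trans (min_le_left _ _)))
    have hc0 : (0:ℝ) < c := by
      have h1 : α * t ≤ α * (1/(2*(α+1))) := mul_le_mul_of_nonneg_left htδ2.le hα
      have h2 : α * (1/(2*(α+1))) < 1 := by
        rw [mul_one_div, div_lt_one (by positivity)]
        linarith
      simp only [hc]; linarith
    have hc1 : c ≤ 1 := by
      have := mul_nonneg hα ht.le
      simp only [hc]; linarith
    have hrc : r ≤ r' * c := by
      have h3 : (α * |r'| + 1) * t ≤ r' - r := by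
        rw [le_div_iff₀ (by positivity)] at htδ1
        linarith [htδ1]
      have h4 : α * t * |r'| ≤ r' - r := by nlinarith [abs_nonneg r', ht.le, hα]
      have h5 : r' * c = r' - α * t * r' := by rw [hc]; ring
      have h6 : α * t * r' ≤ α * t * |r'| := by
        have := mul_nonneg hα ht.le
        nlinarith [le_abs_self r']
      linarith
    have hgx := hδ₀ t ht (lt_of_lt_of_le htδ (min_le_left _ _))
    rw [if_neg hft] at hgx
    have hdir : u + α • (xbar - x) = c • u := by
      rw [hx, hc]
      have h1 : xbar - (xbar + t • u) = -(t • u) := by abel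
      rw [h1, smul_neg, smul_smul, sub_smul, one_smul]
      abel
    rw [hdir, radial] at hgx
    obtain ⟨B, hB⟩ : ∃ B : ℝ, f x = (B : EReal) := ⟨_, (EReal.coe_toReal hft (hbot x)).symm⟩
    have hfreq := Filter.frequently_lt_of_liminf_lt (h := hgx)
    have hIoo : Set.Ioo (0:ℝ) η ∈ 𝓝[>] (0:ℝ) :=
      Ioo_mem_nhdsGT_of_mem (Set.mem_Ico.mpr ⟨le_refl (0:ℝ), hη⟩)
    obtain ⟨s, hsq, hs0, hsη⟩ : ∃ s : ℝ,
        ((s⁻¹ : ℝ) : EReal) * (f (x + s • (c • u)) - f x) < (r : EReal) ∧ 0 < s ∧ s < η := by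
      rcases (hfreq.and_eventually (eventually_of_mem hIoo fun a ha => ha)).exists with ⟨s, h1, h2⟩
      exact ⟨s, h1, h2.1, h2.2⟩
    rw [hB] at hsq
    set y := x + s • (c • u) with hy
    have hyne : f y ≠ ⊤ := by
      intro htop
      rw [htop, EReal.top_sub_coe, EReal.coe_mul_top_of_pos (by positivity)] at hsq
      exact absurd hsq (by simp)
    obtain ⟨C, hC⟩ : ∃ C : ℝ, f y = (C : EReal) := ⟨_, (EReal.coe_toReal hyne (hbot y)).symm⟩
    rw [hC, ← EReal.coe_sub, ← EReal.coe_mul, EReal.coe_lt_coe_iff] at hsq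
    have hCB : C < B + r * s := by
      have h7 : s⁻¹ * (C - B) * s = C - B := by field_simp
      nlinarith [mul_lt_mul_of_pos_right hsq hs0]
    refine ⟨s * c, mul_pos hs0 hc0, lt_of_le_of_lt (by nlinarith) hsη, ?_⟩
    have hxy : xbar + (t + s * c) • u = y := by
      rw [hy, hx]
      module
    rw [hxy, hC, hB, ← EReal.coe_add, EReal.coe_le_coe_iff]
    nlinarith [mul_le_mul_of_nonneg_right hrc hs0.le]
  -- now bound the difference quotients
  have hquot : ∀ᶠ b in 𝓝[>] (0:ℝ),
      ((b⁻¹ : ℝ) : EReal) * (f (xbar + b • u) - f xbar) ≤ (r' : EReal) := by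
    filter_upwards [Ioo_mem_nhdsGT_of_mem (Set.mem_Ico.mpr ⟨le_refl (0:ℝ), hδpos⟩)] with b hb
    have hφb : f (xbar + b • u) ≤ ((A + r' * b : ℝ) : EReal) := by
      have h8 : ∀ ε : ℝ, 0 < ε → f (xbar + b • u) ≤ ((A + r' * b + ε : ℝ) : EReal) := by
        intro ε hε
        obtain ⟨a, ha0, ham, hfa⟩ : ∃ a : ℝ, 0 < a ∧ a < min b (ε/(2*(|r'|+1))) ∧
            f (xbar + a • u) < ((A + ε/2 : ℝ) : EReal) := by
          have hlt : Filter.liminf (fun t : ℝ => f (xbar + t • u)) (𝓝[>] (0:ℝ)) <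
              ((A + ε/2 : ℝ) : EReal) := by
            rw [hacc, hA]
            exact_mod_cast (by linarith : A < A + ε/2)
          have hfr := Filter.frequently_lt_of_liminf_lt (h := hlt)
          have hIoo : Set.Ioo (0:ℝ) (min b (ε/(2*(|r'|+1)))) ∈ 𝓝[>] (0:ℝ) :=
            Ioo_mem_nhdsGT_of_mem (Set.mem_Ico.mpr ⟨le_refl (0:ℝ),
              lt_min hb.1 (by positivity)⟩)
          rcases (hfr.and_eventually (eventually_of_mem hIoo fun a ha => ha)).exists with ⟨a, h1, h2⟩
          exact ⟨a, h2.1, h2.2, h1⟩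
        have hab : a < b := lt_of_lt_of_le ham (min_le_left _ _)
        have hgr := growth (fun t : ℝ => f (xbar + t • u)) hφlsc r' a b (A + ε/2) hab hfa.le ?_
        · refine le_trans hgr ?_
          rw [EReal.coe_le_coe_iff]
          have h9 : |r'| * a ≤ ε/2 := by
            have h10 : a ≤ ε/(2*(|r'|+1)) := le_of_lt (lt_of_lt_of_le ham (min_le_right _ _))
            rw [le_div_iff₀ (by positivity)] at h10
            nlinarith [abs_nonneg r', ha0.le]
          nlinarith [le_abs_self r', neg_abs_le r', ha0.le]
        · intro t hat htb hft
          have ht0 : 0 < t := lt_of_lt_of_le ha0 hat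
          have htδ : t < δ := lt_trans htb hb.2
          obtain ⟨s, hs0, hsη, hle⟩ := key t ht0 htδ hft (b - t) (by linarith)
          exact ⟨s, hs0, by linarith, hle⟩
      exact ereal_le_coe_of_forall_eps _ _ h8
    have hne : f (xbar + b • u) ≠ ⊤ := fun h => EReal.coe_ne_top _ (top_le_iff.mp (h ▸ hφb))
    obtain ⟨C, hC⟩ : ∃ C : ℝ, f (xbar + b • u) = (C : EReal) :=
      ⟨_, (EReal.coe_toReal hne (hbot _)).symm⟩
    rw [hC, hA, ← EReal.coe_sub, ← EReal.coe_mul, EReal.coe_le_coe_iff]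
    rw [hC, EReal.coe_le_coe_iff] at hφb
    have hb1 : b * b⁻¹ = 1 := mul_inv_cancel₀ hb.1.ne'
    by_contra hcon2
    push_neg at hcon2
    have h11 := mul_lt_mul_of_pos_left hcon2 hb.1
    rw [← mul_assoc, hb1, one_mul] at h11
    nlinarith
  have hlim : radialPlus f xbar u ≤ (r' : EReal) := by
    rw [radialPlus]
    exact Filter.limsup_le_of_le (by isBoundedDefault) hquot
  exact absurd (lt_of_lt_of_le hr2' hlim) (lt_irrefl _)
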